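/- Let 0 < 𝓝 < 𝓛 < 𝓜 be reals and define f₁(x) = (𝓜𝓝(𝓛−2x) + (𝓜+𝓝)𝓛x)/𝓛² + 2√(𝓜𝓝(𝓛−𝓝)(𝓜−𝓛)(𝓛−x)x)/𝓛². Then for every x ∈ [0,𝓛], the point (x, f₁(x)) satisfies the ellipse equation (𝓛y − 𝓝𝓜 + (𝓜−𝓝)x)² + 4𝓜(𝓛−𝓝)x(𝓝−y) = 0. -/

import Mathlib

/-- The northwest arc `Γ₁` of the arctic curve:
`f₁(x) = (𝓜𝓝(𝓛-2x) + (𝓜+𝓝)𝓛x)/𝓛² + 2√(𝓜𝓝(𝓛-𝓝)(𝓜-𝓛)(𝓛-x)x)/𝓛²`. -/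
noncomputable def f₁ (𝓛 𝓜 𝓝 x : ℝ) : ℝ :=
  (𝓜 * 𝓝 * (𝓛 - 2 * x) + (𝓜 + 𝓝) * 𝓛 * x) / 𝓛 ^ 2 +
    2 * Real.sqrt (𝓜 * 𝓝 * (𝓛 - 𝓝) * (𝓜 - 𝓛) * (𝓛 - x) * x) / 𝓛 ^ 2

/-- For `0 < 𝓝 < 𝓛 < 𝓜` and every `x ∈ [0, 𝓛]`, the point `(x, f₁(x))`
satisfies the ellipse equation `(𝓛y - 𝓝𝓜 + (𝓜-𝓝)x)² + 4𝓜(𝓛-𝓝)x(𝓝-y) = 0`. -/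
theorem arctic_arc_on_ellipse (𝓛 𝓜 𝓝 x : ℝ)
    (h𝓝 : 0 < 𝓝) (h𝓝𝓛 : 𝓝 < 𝓛) (h𝓛𝓜 : 𝓛 < 𝓜)
    (hx : x ∈ Set.Icc (0 : ℝ) 𝓛) :
    (𝓛 * f₁ 𝓛 𝓜 𝓝 x - 𝓝 * 𝓜 + (𝓜 - 𝓝) * x) ^ 2 +
      4 * 𝓜 * (𝓛 - 𝓝) * x * (𝓝 - f₁ 𝓛 𝓜 𝓝 x) = 0 := by
  obtain ⟨hx0, hxL⟩ := hx
  have hA : 0 ≤ 𝓜 * 𝓝 * (𝓛 - 𝓝) * (𝓜 - 𝓛) * (𝓛 - x) * x :=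
    mul_nonneg (mul_nonneg (mul_nonneg (mul_nonneg
      (mul_nonneg (by linarith) h𝓝.le) (by linarith)) (by linarith)) (by linarith)) hx0
  have hL : (𝓛 : ℝ) ≠ 0 := by linarith
  unfold f₁
  set s := Real.sqrt (𝓜 * 𝓝 * (𝓛 - 𝓝) * (𝓜 - 𝓛) * (𝓛 - x) * x) with hsdef
  have hs : s ^ 2 = 𝓜 * 𝓝 * (𝓛 - 𝓝) * (𝓜 - 𝓛) * (𝓛 - x) * x := Real.sq_sqrt hA
  field_simp
  linear_combination 4 * hs
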